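/- Let D ⊆ ℝ² be open and let w, B, H, u : D → ℂ′ be C² maps, and fix ε̃ ∈ {1, −1, i′, −i′}. For μ ∈ S¹₁ define the 2×2 matrices over ℂ′: U^μ := [[¼∂_z w + ½(∂_z H)·ε̃·exp(−w/2)·exp(u/2), −μ⁻¹·ε̃·exp(w/2)], [μ⁻¹·B·ε̃·exp(−w/2), −¼∂_z w]] and V^μ := [[−¼∂_z̄ w, −μ·B̄·ε̃·exp(−w/2)], [μ·ε̃·exp(w/2), ¼∂_z̄ w + ½(∂_z̄ H)·ε̃·exp(−w/2)·exp(u/2)]]. Then the zero-curvature equation ∂_z̄ U^μ − ∂_z V^μ + [V^μ, U^μ] = 0 holds on D for every μ ∈ S¹₁ if and only if the following equations hold on D: (i) (∂_z̄ H)·exp(u/2) = 0 and ∂_z̄ B + ½B(∂_z̄ H)ε̃·exp(−w/2)·exp(u/2) = 0; (ii) ½∂_z∂_z̄ w + exp(w) − B·B̄·exp(−w) + ½(∂_z∂_z̄ H + p)·ε̃·exp(−w/2)·exp(u/2) = 0 both for p = (∂_z H)·∂_z̄(−w/2 + u/2) and for p = (∂_z̄ H)·∂_z(−w/2 + u/2);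 (iii) ∂_z B̄ + ½B̄(∂_z H)ε̃·exp(−w/2)·exp(u/2) = 0 and (∂_z H)·exp(u/2) = 0. -/

import Mathlib

noncomputable section

/-- Para-complex numbers modeled as the product ring ℝ × ℝ. -/
abbrev Cp : Type := ℝ × ℝ

/-- The para-complex unit i′ = (1, -1), satisfying i′² = 1. -/
def ip : Cp := (1, -1)

/-- Para-complex conjugation. -/
def pconj (z : Cp) : Cp := (z.2, z.1)

/-- Real part of a para-complex number. -/
def pRe (z : Cp) : ℝ := (z.1 + z.2) / 2

/-- Imaginary part of a para-complex number. -/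
def pIm (z : Cp) : ℝ := (z.1 - z.2) / 2

/-- Embedding of ℝ into the para-complex numbers. -/
def oR (r : ℝ) : Cp := (r, r)

/-- The exponential of the Banach algebra ℝ × ℝ (componentwise real exponential). -/
def pexp (z : Cp) : Cp := (Real.exp z.1, Real.exp z.2)

/-- The para-complex derivative ∂_z f = ½(∂ₓf + i′ ∂_y f). -/
def dz (f : Cp → Cp) (p : Cp) : Cp :=
  oR (1/2) * (fderiv ℝ f p (1, 0) + ip * fderiv ℝ f p (0, 1))

/-- The para-complex derivative ∂_z̄ f = ½(∂ₓf − i′ ∂_y f). -/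
def dzbar (f : Cp → Cp) (p : Cp) : Cp :=
  oR (1/2) * (fderiv ℝ f p (1, 0) - ip * fderiv ℝ f p (0, 1))

/-- Entrywise ∂_z of a matrix-valued map. -/
def dzM (A : Cp → Matrix (Fin 2) (Fin 2) Cp) (p : Cp) : Matrix (Fin 2) (Fin 2) Cp :=
  Matrix.of fun i j => dz (fun q => A q i j) p

/-- Entrywise ∂_z̄ of a matrix-valued map. -/
def dzbarM (A : Cp → Matrix (Fin 2) (Fin 2) Cp) (p : Cp) : Matrix (Fin 2) (Fin 2) Cp :=
  Matrix.of fun i j => dzbar (fun q => A q i j) p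

/-- The matrix U^μ. -/
def Umu (w B H u : Cp → Cp) (ε μ : Cp) (q : Cp) : Matrix (Fin 2) (Fin 2) Cp :=
  !![oR (1/4) * dz w q + oR (1/2) * dz H q * ε * pexp (-(w q) / 2) * pexp (u q / 2),
      -(μ⁻¹ * ε * pexp (w q / 2));
     μ⁻¹ * B q * ε * pexp (-(w q) / 2),
      -(oR (1/4) * dz w q)]

/-- The matrix V^μ. -/
def Vmu (w B H u : Cp → Cp) (ε μ : Cp) (q : Cp) : Matrix (Fin 2) (Fin 2) Cp :=
  !![-(oR (1/4) * dzbar w q),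
      -(μ * pconj (B q) * ε * pexp (-(w q) / 2));
     μ * ε * pexp (w q / 2),
      oR (1/4) * dzbar w q + oR (1/2) * dzbar H q * ε * pexp (-(w q) / 2) * pexp (u q / 2)]


namespace ZCAux

/-! ### Algebraic lemmas on the para-complex numbers -/

lemma two_fst : ((2:Cp)).1 = 2 := rfl
lemma two_snd : ((2:Cp)).2 = 2 := rfl

lemma oR_mul (a b : ℝ) : oR a * oR b = oR (a*b) := by simp [oR, Prod.ext_iff]

lemma pexp_add (a b : Cp) : pexp (a+b) = pexp a * pexp b := by
  simp [pexp, Prod.ext_iff, Real.exp_add]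

lemma pexp_zero : pexp 0 = 1 := by simp [pexp, Prod.ext_iff]

lemma div_two (z : Cp) : z / 2 = oR (1/2) * z := by
  simp [oR, Prod.ext_iff, two_fst, two_snd]; constructor <;> ring

lemma inv_of_unit (μ : Cp) (hμ : μ * pconj μ = 1) : μ⁻¹ = pconj μ := by
  obtain ⟨h1, h2⟩ := Prod.ext_iff.mp hμ
  simp only [pconj] at *
  exact Prod.ext (inv_eq_of_mul_eq_one_right h1) (inv_eq_of_mul_eq_one_right h2)

lemma eps_sq (ε : Cp) (hε : ε = 1 ∨ ε = -1 ∨ ε = ip ∨ ε = -ip) : ε * ε = 1 := by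
  rcases hε with h|h|h|h <;> subst h <;> simp [ip, Prod.ext_iff]

lemma half_add_half (z : Cp) : z / 2 + z / 2 = z := by
  simp [Prod.ext_iff, two_fst, two_snd]

lemma half_add_neg_half (z : Cp) : z / 2 + -z / 2 = 0 := by
  simp [Prod.ext_iff, two_fst, two_snd]; constructor <;> ring

lemma ho24 : oR (1/4) + oR (1/4) = oR (1/2) := by
  simp [oR, Prod.ext_iff]; norm_num

lemma half_cancel (X : Cp) (h : oR (1/2) * X = 0) : X = 0 := by
  simp [oR, Prod.ext_iff] at h ⊢
  obtain ⟨h1, h2⟩ := h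
  constructor <;> linarith

lemma eps_pexp_cancel (ε : Cp) (he2 : ε * ε = 1) (z X : Cp)
    (h : ε * pexp z * X = 0) : X = 0 := by
  have h2 : pexp (-z) * pexp z = 1 := by rw [← pexp_add, neg_add_cancel, pexp_zero]
  calc X = (ε * pexp (-z)) * (ε * pexp z * X) := by
        linear_combination (- X * (pexp (-z) * pexp z)) * he2 + (- X) * h2
    _ = 0 := by rw [h, mul_zero]

lemma entry_ext {a b c d : Cp} (h : !![a, b; c, d] = (0 : Matrix (Fin 2) (Fin 2) Cp)) :
    a = 0 ∧ b = 0 ∧ c = 0 ∧ d = 0 := by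
  refine ⟨?_, ?_, ?_, ?_⟩
  · simpa using congrFun (congrFun h 0) 0
  · simpa using congrFun (congrFun h 0) 1
  · simpa using congrFun (congrFun h 1) 0
  · simpa using congrFun (congrFun h 1) 1

lemma solve2 (P Q : Cp) (h1 : P + Q = 0)
    (h2 : pconj ((2:ℝ),(1/2:ℝ)) * P + ((2:ℝ),(1/2:ℝ)) * Q = 0) : P = 0 ∧ Q = 0 := by
  obtain ⟨a1, a2⟩ := Prod.ext_iff.mp h1
  obtain ⟨b1, b2⟩ := Prod.ext_iff.mp h2
  simp [pconj] at a1 a2 b1 b2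
  constructor <;> simp [Prod.ext_iff] <;> constructor <;> linarith

/-! ### Differential calculus lemmas -/

variable {f g : Cp → Cp} {q : Cp}

lemma fd_mul (hf : DifferentiableAt ℝ f q) (hg : DifferentiableAt ℝ g q) (v : Cp) :
    fderiv ℝ (fun x => f x * g x) q v = f q * fderiv ℝ g q v + fderiv ℝ f q v * g q := by
  rw [fderiv_fun_mul hf hg]; simp [smul_eq_mul]; ring

lemma fd_pexp (hf : DifferentiableAt ℝ f q) (v : Cp) :
    fderiv ℝ (fun x => pexp (f x)) q v = pexp (f q) * fderiv ℝ f q v := by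
  have h1 : HasFDerivAt (fun x => (f x).1)
      ((ContinuousLinearMap.fst ℝ ℝ ℝ).comp (fderiv ℝ f q)) q := hf.hasFDerivAt.fst
  have h2 : HasFDerivAt (fun x => (f x).2)
      ((ContinuousLinearMap.snd ℝ ℝ ℝ).comp (fderiv ℝ f q)) q := hf.hasFDerivAt.snd
  have h3 := (h1.exp).prodMk (h2.exp)
  have h4 : (fun x => pexp (f x)) = fun x => (Real.exp ((f x).1), Real.exp ((f x).2)) := rfl
  rw [h4, h3.fderiv]
  simp [pexp, smul_eq_mul, Prod.ext_iff]

lemma pexp_diff (hf : DifferentiableAt ℝ f q) :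
    DifferentiableAt ℝ (fun x => pexp (f x)) q :=
  (((hf.hasFDerivAt.fst).exp).prodMk ((hf.hasFDerivAt.snd).exp)).differentiableAt

lemma dz_add (hf : DifferentiableAt ℝ f q) (hg : DifferentiableAt ℝ g q) :
    dz (fun x => f x + g x) q = dz f q + dz g q := by
  unfold dz; rw [fderiv_fun_add hf hg]; simp; ring

lemma dzbar_add (hf : DifferentiableAt ℝ f q) (hg : DifferentiableAt ℝ g q) :
    dzbar (fun x => f x + g x) q = dzbar f q + dzbar g q := by
  unfold dzbar; rw [fderiv_fun_add hf hg]; simp; ring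

lemma dz_mul (hf : DifferentiableAt ℝ f q) (hg : DifferentiableAt ℝ g q) :
    dz (fun x => f x * g x) q = dz f q * g q + f q * dz g q := by
  unfold dz; rw [fd_mul hf hg, fd_mul hf hg]; ring

lemma dzbar_mul (hf : DifferentiableAt ℝ f q) (hg : DifferentiableAt ℝ g q) :
    dzbar (fun x => f x * g x) q = dzbar f q * g q + f q * dzbar g q := by
  unfold dzbar; rw [fd_mul hf hg, fd_mul hf hg]; ring

lemma dz_pexp (hf : DifferentiableAt ℝ f q) :
    dz (fun x => pexp (f x)) q = pexp (f q) * dz f q := by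
  unfold dz; rw [fd_pexp hf, fd_pexp hf]; ring

lemma dzbar_pexp (hf : DifferentiableAt ℝ f q) :
    dzbar (fun x => pexp (f x)) q = pexp (f q) * dzbar f q := by
  unfold dzbar; rw [fd_pexp hf, fd_pexp hf]; ring

lemma dz_const (c : Cp) : dz (fun _ => c) q = 0 := by unfold dz; simp

lemma dzbar_const (c : Cp) : dzbar (fun _ => c) q = 0 := by unfold dzbar; simp

lemma dz_const_mul (c : Cp) (hf : DifferentiableAt ℝ f q) :
    dz (fun x => c * f x) q = c * dz f q := by
  rw [dz_mul (differentiableAt_const c) hf, dz_const]; ring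

lemma dzbar_const_mul (c : Cp) (hf : DifferentiableAt ℝ f q) :
    dzbar (fun x => c * f x) q = c * dzbar f q := by
  rw [dzbar_mul (differentiableAt_const c) hf, dzbar_const]; ring

lemma dz_neg : dz (fun x => -(f x)) q = -(dz f q) := by
  unfold dz; rw [fderiv_fun_neg]; simp; ring

lemma dzbar_neg : dzbar (fun x => -(f x)) q = -(dzbar f q) := by
  unfold dzbar; rw [fderiv_fun_neg]; simp; ring

lemma fd_apply_diff (h : ContDiffAt ℝ 2 f q) (v : Cp) :
    DifferentiableAt ℝ (fun p => fderiv ℝ f p v) q := by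
  have h1 : ContDiffAt ℝ 1 (fderiv ℝ f) q := h.fderiv_right (by norm_num)
  exact ((ContinuousLinearMap.apply ℝ Cp v).differentiable.differentiableAt).comp q
    (h1.differentiableAt (by norm_num))

lemma fd_apply_fderiv (h : ContDiffAt ℝ 2 f q) (v v' : Cp) :
    fderiv ℝ (fun p => fderiv ℝ f p v) q v' = fderiv ℝ (fderiv ℝ f) q v' v := by
  have h1 : ContDiffAt ℝ 1 (fderiv ℝ f) q := h.fderiv_right (by norm_num)
  have h2 := ((ContinuousLinearMap.apply ℝ Cp v).hasFDerivAt.comp q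
    (h1.differentiableAt (by norm_num)).hasFDerivAt)
  have h3 : (fun p => fderiv ℝ f p v) = (⇑((ContinuousLinearMap.apply ℝ Cp) v) ∘ fderiv ℝ f) := rfl
  rw [h3, h2.fderiv]; simp

lemma dz_diff (h : ContDiffAt ℝ 2 f q) : DifferentiableAt ℝ (dz f) q := by
  unfold dz
  exact (differentiableAt_const _).fun_mul ((fd_apply_diff h _).add
    ((differentiableAt_const _).fun_mul (fd_apply_diff h _)))

lemma dzbar_diff (h : ContDiffAt ℝ 2 f q) : DifferentiableAt ℝ (dzbar f) q := by
  unfold dzbar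
  exact (differentiableAt_const _).fun_mul ((fd_apply_diff h _).sub
    ((differentiableAt_const _).fun_mul (fd_apply_diff h _)))

lemma fd_const_mul (hf : DifferentiableAt ℝ f q) (c : Cp) (v : Cp) :
    fderiv ℝ (fun x => c * f x) q v = c * fderiv ℝ f q v := by
  rw [fderiv_const_mul hf c]; simp

lemma fd_add (hf : DifferentiableAt ℝ f q) (hg : DifferentiableAt ℝ g q) (v : Cp) :
    fderiv ℝ (fun x => f x + g x) q v = fderiv ℝ f q v + fderiv ℝ g q v := by
  rw [fderiv_fun_add hf hg]; simp

lemma fd_sub (hf : DifferentiableAt ℝ f q) (hg : DifferentiableAt ℝ g q) (v : Cp) :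
    fderiv ℝ (fun x => f x - g x) q v = fderiv ℝ f q v - fderiv ℝ g q v := by
  rw [fderiv_fun_sub hf hg]; simp

lemma dzbar_dz_comm (h : ContDiffAt ℝ 2 f q) : dzbar (dz f) q = dz (dzbar f) q := by
  have hsymm := h.isSymmSndFDerivAt (n := 2) (by norm_num)
  have hX := fd_apply_diff h ((1:ℝ), (0:ℝ))
  have hY := fd_apply_diff h ((0:ℝ), (1:ℝ))
  have hs : fderiv ℝ (fderiv ℝ f) q (1,0) (0,1) = fderiv ℝ (fderiv ℝ f) q (0,1) (1,0) :=
    hsymm _ _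
  have key : ∀ v : Cp,
      fderiv ℝ (dz f) q v = oR (1/2) * (fderiv ℝ (fderiv ℝ f) q v (1,0)
        + ip * fderiv ℝ (fderiv ℝ f) q v (0,1)) := by
    intro v
    have e1 : dz f = fun p => oR (1/2) * (fderiv ℝ f p (1,0) + ip * fderiv ℝ f p (0,1)) := rfl
    rw [e1, fd_const_mul (hX.fun_add ((differentiableAt_const _).fun_mul hY)) _ v,
      fd_add hX ((differentiableAt_const _).fun_mul hY) v, fd_const_mul hY ip v,
      fd_apply_fderiv h _ v, fd_apply_fderiv h _ v]
  have key2 : ∀ v : Cp,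
      fderiv ℝ (dzbar f) q v = oR (1/2) * (fderiv ℝ (fderiv ℝ f) q v (1,0)
        - ip * fderiv ℝ (fderiv ℝ f) q v (0,1)) := by
    intro v
    have e1 : dzbar f = fun p => oR (1/2) * (fderiv ℝ f p (1,0) - ip * fderiv ℝ f p (0,1)) := rfl
    rw [e1, fd_const_mul (hX.fun_sub ((differentiableAt_const _).fun_mul hY)) _ v,
      fd_sub hX ((differentiableAt_const _).fun_mul hY) v, fd_const_mul hY ip v,
      fd_apply_fderiv h _ v, fd_apply_fderiv h _ v]
  show oR (1/2) * (fderiv ℝ (dz f) q (1,0) - ip * fderiv ℝ (dz f) q (0,1))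
      = oR (1/2) * (fderiv ℝ (dzbar f) q (1,0) + ip * fderiv ℝ (dzbar f) q (0,1))
  rw [key, key, key2, key2, hs]
  ring

lemma pconjB_diff {B : Cp → Cp} (hB1 : DifferentiableAt ℝ B q) :
    DifferentiableAt ℝ (fun r => pconj (B r)) q := hB1.snd.prodMk hB1.fst

/-! ### The key computation -/

lemma key (w B H u : Cp → Cp) (ε μ : Cp) (q : Cp)
    (hw2 : ContDiffAt ℝ 2 w q) (hB2 : ContDiffAt ℝ 2 B q)
    (hH2 : ContDiffAt ℝ 2 H q) (hu2 : ContDiffAt ℝ 2 u q)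
    (hε : ε = 1 ∨ ε = -1 ∨ ε = ip ∨ ε = -ip) (hμ : μ * pconj μ = 1) :
    dzbarM (Umu w B H u ε μ) q - dzM (Vmu w B H u ε μ) q
      + (Vmu w B H u ε μ q * Umu w B H u ε μ q
          - Umu w B H u ε μ q * Vmu w B H u ε μ q)
    = !![oR (1/2) * dz (dzbar w) q + pexp (w q) - B q * pconj (B q) * pexp (-(w q))
            + oR (1/2) * (dz (dzbar H) q
                + dz H q * dzbar (fun r => -(w r) / 2 + u r / 2) q)
              * ε * pexp (-(w q) / 2) * pexp (u q / 2),
        pconj μ * (oR (1/2) * (dzbar H q * pexp (u q / 2)))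
          + μ * (ε * pexp (-(w q) / 2) * (dz (fun r => pconj (B r)) q
              + oR (1/2) * pconj (B q) * dz H q * ε * pexp (-(w q) / 2) * pexp (u q / 2)));
        pconj μ * (ε * pexp (-(w q) / 2) * (dzbar B q
              + oR (1/2) * B q * dzbar H q * ε * pexp (-(w q) / 2) * pexp (u q / 2)))
          + μ * (oR (1/2) * (dz H q * pexp (u q / 2))),
        -(oR (1/2) * dz (dzbar w) q + pexp (w q) - B q * pconj (B q) * pexp (-(w q))
            + oR (1/2) * (dz (dzbar H) q
                + dzbar H q * dz (fun r => -(w r) / 2 + u r / 2) q)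
              * ε * pexp (-(w q) / 2) * pexp (u q / 2))] := by
  have hw1 : DifferentiableAt ℝ w q := hw2.differentiableAt (by norm_num)
  have hB1 : DifferentiableAt ℝ B q := hB2.differentiableAt (by norm_num)
  have hH1 : DifferentiableAt ℝ H q := hH2.differentiableAt (by norm_num)
  have hu1 : DifferentiableAt ℝ u q := hu2.differentiableAt (by norm_num)
  have he2 : ε * ε = 1 := eps_sq ε hε
  have hinv : μ⁻¹ = pconj μ := inv_of_unit μ hμ
  -- differentiability of the half-functions
  have ew : (fun r => w r / 2) = fun r => oR (1/2) * w r := funext fun r => div_two _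
  have emw : (fun r => -(w r) / 2) = fun r => oR (1/2) * -(w r) := funext fun r => div_two _
  have eg : (fun r => -(w r) / 2 + u r / 2)
      = fun r => oR (1/2) * -(w r) + oR (1/2) * u r := by
    funext r; rw [div_two, div_two]
  have hhw : DifferentiableAt ℝ (fun r => w r / 2) q := by
    rw [ew]; exact (differentiableAt_const _).fun_mul hw1
  have hmw : DifferentiableAt ℝ (fun r => -(w r) / 2) q := by
    rw [emw]; exact (differentiableAt_const _).fun_mul hw1.fun_neg
  have hg : DifferentiableAt ℝ (fun r => -(w r) / 2 + u r / 2) q := by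
    rw [eg]
    exact ((differentiableAt_const _).fun_mul hw1.fun_neg).fun_add ((differentiableAt_const _).fun_mul hu1)
  -- derivatives of the half-functions
  have dzbar_hw : dzbar (fun r => w r / 2) q = oR (1/2) * dzbar w q := by
    rw [ew]; exact dzbar_const_mul _ hw1
  have dz_hw : dz (fun r => w r / 2) q = oR (1/2) * dz w q := by
    rw [ew]; exact dz_const_mul _ hw1
  have dzbar_mhw : dzbar (fun r => -(w r) / 2) q = oR (1/2) * -(dzbar w q) := by
    rw [emw, dzbar_const_mul _ hw1.fun_neg, dzbar_neg]
  have dz_mhw : dz (fun r => -(w r) / 2) q = oR (1/2) * -(dz w q) := by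
    rw [emw, dz_const_mul _ hw1.fun_neg, dz_neg]
  -- pexp identities
  have hPM : pexp (w q / 2) * pexp (-(w q) / 2) = 1 := by
    rw [← pexp_add, half_add_neg_half, pexp_zero]
  have hP2 : pexp (w q) = pexp (w q / 2) * pexp (w q / 2) := by
    rw [← pexp_add, half_add_half]
  have hM2 : pexp (-(w q)) = pexp (-(w q) / 2) * pexp (-(w q) / 2) := by
    rw [← pexp_add, half_add_half]
  -- the eight entry derivatives
  have d1 : dzbar (fun r => oR (1/4) * dz w r
        + oR (1/2) * dz H r * ε * pexp (-(w r) / 2) * pexp (u r / 2)) q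
      = oR (1/4) * dz (dzbar w) q
        + oR (1/2) * ε * ((dz (dzbar H) q
            + dz H q * dzbar (fun r => -(w r) / 2 + u r / 2) q)
          * (pexp (-(w q) / 2) * pexp (u q / 2))) := by
    have hstep : (fun r => oR (1/4) * dz w r
          + oR (1/2) * dz H r * ε * pexp (-(w r) / 2) * pexp (u r / 2))
        = fun r => oR (1/4) * dz w r
            + (oR (1/2) * ε) * (dz H r * pexp (-(w r) / 2 + u r / 2)) := by
      funext r; rw [pexp_add]; ring
    rw [hstep, dzbar_add ((differentiableAt_const _).fun_mul (dz_diff hw2))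
        ((differentiableAt_const _).fun_mul ((dz_diff hH2).fun_mul (pexp_diff hg))),
      dzbar_const_mul _ (dz_diff hw2),
      dzbar_const_mul _ ((dz_diff hH2).fun_mul (pexp_diff hg)),
      dzbar_mul (dz_diff hH2) (pexp_diff hg), dzbar_pexp hg,
      dzbar_dz_comm hw2, dzbar_dz_comm hH2, pexp_add]
    ring
  have d2 : dzbar (fun r => -(μ⁻¹ * ε * pexp (w r / 2))) q
      = -((μ⁻¹ * ε) * (pexp (w q / 2) * (oR (1/2) * dzbar w q))) := by
    rw [show dzbar (fun r => -(μ⁻¹ * ε * pexp (w r / 2))) q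
        = -(dzbar (fun r => μ⁻¹ * ε * pexp (w r / 2)) q) from dzbar_neg,
      dzbar_const_mul (μ⁻¹ * ε) (pexp_diff hhw), dzbar_pexp hhw, dzbar_hw]
  have d3 : dzbar (fun r => μ⁻¹ * B r * ε * pexp (-(w r) / 2)) q
      = (μ⁻¹ * ε) * ((dzbar B q + B q * (oR (1/2) * -(dzbar w q))) * pexp (-(w q) / 2)) := by
    have hstep : (fun r => μ⁻¹ * B r * ε * pexp (-(w r) / 2))
        = fun r => (μ⁻¹ * ε) * (B r * pexp (-(w r) / 2)) := by
      funext r; ring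
    rw [hstep, dzbar_const_mul _ (hB1.fun_mul (pexp_diff hmw)),
      dzbar_mul hB1 (pexp_diff hmw), dzbar_pexp hmw, dzbar_mhw]
    ring
  have d4 : dzbar (fun r => -(oR (1/4) * dz w r)) q = -(oR (1/4) * dz (dzbar w) q) := by
    rw [show dzbar (fun r => -(oR (1/4) * dz w r)) q
        = -(dzbar (fun r => oR (1/4) * dz w r) q) from dzbar_neg,
      dzbar_const_mul _ (dz_diff hw2), dzbar_dz_comm hw2]
  have d5 : dz (fun r => -(oR (1/4) * dzbar w r)) q = -(oR (1/4) * dz (dzbar w) q) := by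
    rw [show dz (fun r => -(oR (1/4) * dzbar w r)) q
        = -(dz (fun r => oR (1/4) * dzbar w r) q) from dz_neg,
      dz_const_mul _ (dzbar_diff hw2)]
  have d6 : dz (fun r => -(μ * pconj (B r) * ε * pexp (-(w r) / 2))) q
      = -((μ * ε) * ((dz (fun r => pconj (B r)) q
          + pconj (B q) * (oR (1/2) * -(dz w q))) * pexp (-(w q) / 2))) := by
    have hstep : (fun r => μ * pconj (B r) * ε * pexp (-(w r) / 2))
        = fun r => (μ * ε) * (pconj (B r) * pexp (-(w r) / 2)) := by
      funext r; ring
    rw [show dz (fun r => -(μ * pconj (B r) * ε * pexp (-(w r) / 2))) q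
        = -(dz (fun r => μ * pconj (B r) * ε * pexp (-(w r) / 2)) q) from dz_neg,
      hstep, dz_const_mul _ ((pconjB_diff hB1).fun_mul (pexp_diff hmw)),
      dz_mul (pconjB_diff hB1) (pexp_diff hmw), dz_pexp hmw, dz_mhw]
    ring
  have d7 : dz (fun r => μ * ε * pexp (w r / 2)) q
      = (μ * ε) * (pexp (w q / 2) * (oR (1/2) * dz w q)) := by
    rw [dz_const_mul (μ * ε) (pexp_diff hhw), dz_pexp hhw, dz_hw]
  have d8 : dz (fun r => oR (1/4) * dzbar w r
        + oR (1/2) * dzbar H r * ε * pexp (-(w r) / 2) * pexp (u r / 2)) q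
      = oR (1/4) * dz (dzbar w) q
        + oR (1/2) * ε * ((dz (dzbar H) q
            + dzbar H q * dz (fun r => -(w r) / 2 + u r / 2) q)
          * (pexp (-(w q) / 2) * pexp (u q / 2))) := by
    have hstep : (fun r => oR (1/4) * dzbar w r
          + oR (1/2) * dzbar H r * ε * pexp (-(w r) / 2) * pexp (u r / 2))
        = fun r => oR (1/4) * dzbar w r
            + (oR (1/2) * ε) * (dzbar H r * pexp (-(w r) / 2 + u r / 2)) := by
      funext r; rw [pexp_add]; ring
    rw [hstep, dz_add ((differentiableAt_const _).fun_mul (dzbar_diff hw2))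
        ((differentiableAt_const _).fun_mul ((dzbar_diff hH2).fun_mul (pexp_diff hg))),
      dz_const_mul _ (dzbar_diff hw2),
      dz_const_mul _ ((dzbar_diff hH2).fun_mul (pexp_diff hg)),
      dz_mul (dzbar_diff hH2) (pexp_diff hg), dz_pexp hg, pexp_add]
    ring
  refine Matrix.ext fun i j => ?_
  fin_cases i <;> fin_cases j <;>
    simp only [dzbarM, dzM, Umu, Vmu, Matrix.sub_apply, Matrix.add_apply, Matrix.of_apply,
      Matrix.mul_apply, Fin.sum_univ_two, Matrix.cons_val', Matrix.cons_val_zero,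
      Matrix.cons_val_one, Matrix.head_cons, Matrix.empty_val', Matrix.cons_val_fin_one,
      Matrix.head_fin_const, Fin.isValue, Fin.zero_eta, Fin.mk_one]
  · rw [d1, d5, hinv, hP2, hM2]
    linear_combination dz (dzbar w) q * ho24
      + ((pexp (w q / 2) * pexp (w q / 2)
          - B q * pconj (B q) * (pexp (-(w q) / 2) * pexp (-(w q) / 2))) * (ε * ε)) * hμ
      + (pexp (w q / 2) * pexp (w q / 2)
          - B q * pconj (B q) * (pexp (-(w q) / 2) * pexp (-(w q) / 2))) * he2
  · rw [d2, d6, hinv]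
    linear_combination (dzbar w q * pconj μ * ε * pexp (w q / 2)
        + dz w q * pconj (B q) * μ * ε * pexp (-(w q) / 2)) * ho24
      + (oR (1/2) * dzbar H q * pexp (u q / 2) * pconj μ
          * (pexp (w q / 2) * pexp (-(w q) / 2))) * he2
      + (oR (1/2) * dzbar H q * pexp (u q / 2) * pconj μ) * hPM
  · rw [d3, d7, hinv]
    linear_combination (dzbar w q * pconj μ * B q * ε * pexp (-(w q) / 2)
        + dz w q * μ * ε * pexp (w q / 2)) * ho24
      + (oR (1/2) * dz H q * pexp (u q / 2) * μ
          * (pexp (w q / 2) * pexp (-(w q) / 2))) * he2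
      + (oR (1/2) * dz H q * pexp (u q / 2) * μ) * hPM
  · rw [d4, d8, hinv, hP2, hM2]
    linear_combination (-(dz (dzbar w) q)) * ho24
      - ((pexp (w q / 2) * pexp (w q / 2)
          - B q * pconj (B q) * (pexp (-(w q) / 2) * pexp (-(w q) / 2))) * (ε * ε)) * hμ
      - (pexp (w q / 2) * pexp (w q / 2)
          - B q * pconj (B q) * (pexp (-(w q) / 2) * pexp (-(w q) / 2))) * he2

end ZCAux

/-- The zero-curvature equation ∂_z̄U^μ − ∂_zV^μ + [V^μ, U^μ] = 0 holds on D for every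
μ ∈ S¹₁ iff the structure equations (i), (ii), (iii) hold on D. -/
theorem zero_curvature_iff (D : Set Cp) (hD : IsOpen D)
    (w B H u : Cp → Cp)
    (hw : ContDiffOn ℝ 2 w D) (hB : ContDiffOn ℝ 2 B D)
    (hH : ContDiffOn ℝ 2 H D) (hu : ContDiffOn ℝ 2 u D)
    (ε : Cp) (hε : ε = 1 ∨ ε = -1 ∨ ε = ip ∨ ε = -ip) :
    (∀ μ : Cp, μ * pconj μ = 1 → 0 < pRe μ → ∀ q ∈ D,
        dzbarM (Umu w B H u ε μ) q - dzM (Vmu w B H u ε μ) q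
          + (Vmu w B H u ε μ q * Umu w B H u ε μ q
              - Umu w B H u ε μ q * Vmu w B H u ε μ q) = 0)
    ↔ (∀ q ∈ D,
        (dzbar H q * pexp (u q / 2) = 0 ∧
          dzbar B q
            + oR (1/2) * B q * dzbar H q * ε * pexp (-(w q) / 2) * pexp (u q / 2) = 0) ∧
        (oR (1/2) * dz (dzbar w) q + pexp (w q) - B q * pconj (B q) * pexp (-(w q))
            + oR (1/2) * (dz (dzbar H) q
                + dz H q * dzbar (fun r => -(w r) / 2 + u r / 2) q)
              * ε * pexp (-(w q) / 2) * pexp (u q / 2) = 0 ∧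
          oR (1/2) * dz (dzbar w) q + pexp (w q) - B q * pconj (B q) * pexp (-(w q))
            + oR (1/2) * (dz (dzbar H) q
                + dzbar H q * dz (fun r => -(w r) / 2 + u r / 2) q)
              * ε * pexp (-(w q) / 2) * pexp (u q / 2) = 0) ∧
        (dz (fun r => pconj (B r)) q
            + oR (1/2) * pconj (B q) * dz H q * ε * pexp (-(w q) / 2) * pexp (u q / 2) = 0 ∧
          dz H q * pexp (u q / 2) = 0)) := by
  constructor
  · intro hZ q hq
    have hw2 := hw.contDiffAt (hD.mem_nhds hq)
    have hB2 := hB.contDiffAt (hD.mem_nhds hq)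
    have hH2 := hH.contDiffAt (hD.mem_nhds hq)
    have hu2 := hu.contDiffAt (hD.mem_nhds hq)
    have he2 : ε * ε = 1 := ZCAux.eps_sq ε hε
    have hμ1 : (1:Cp) * pconj 1 = 1 := by simp [pconj, Prod.ext_iff]
    have hμ2 : ((2:ℝ),(1/2:ℝ)) * pconj ((2:ℝ),(1/2:ℝ)) = (1:Cp) := by
      norm_num [pconj, Prod.ext_iff]
    have h1 := hZ 1 hμ1 (by norm_num [pRe]) q hq
    have h2 := hZ ((2:ℝ),(1/2:ℝ)) hμ2 (by norm_num [pRe]) q hq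
    rw [ZCAux.key w B H u ε 1 q hw2 hB2 hH2 hu2 hε hμ1] at h1
    rw [ZCAux.key w B H u ε ((2:ℝ),(1/2:ℝ)) q hw2 hB2 hH2 hu2 hε hμ2] at h2
    obtain ⟨E1, O1a, O1b, E2⟩ := ZCAux.entry_ext h1
    obtain ⟨-, O2a, O2b, -⟩ := ZCAux.entry_ext h2
    have hpconj1 : pconj (1:Cp) = 1 := by simp [pconj, Prod.ext_iff]
    rw [hpconj1, one_mul, one_mul] at O1a
    rw [hpconj1, one_mul, one_mul] at O1b
    obtain ⟨hP1, hQ1⟩ := ZCAux.solve2 _ _ O1a O2a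
    obtain ⟨hP2, hQ2⟩ := ZCAux.solve2 _ _ O1b O2b
    have E2' : oR (1/2) * dz (dzbar w) q + pexp (w q) - B q * pconj (B q) * pexp (-(w q))
        + oR (1/2) * (dz (dzbar H) q
            + dzbar H q * dz (fun r => -(w r) / 2 + u r / 2) q)
          * ε * pexp (-(w q) / 2) * pexp (u q / 2) = 0 := by
      linear_combination -E2
    exact ⟨⟨ZCAux.half_cancel _ hP1, ZCAux.eps_pexp_cancel ε he2 _ _ hP2⟩,
      ⟨E1, E2'⟩,
      ⟨ZCAux.eps_pexp_cancel ε he2 _ _ hQ1, ZCAux.half_cancel _ hQ2⟩⟩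
  · intro hS μ hμ hpRe q hq
    have hw2 := hw.contDiffAt (hD.mem_nhds hq)
    have hB2 := hB.contDiffAt (hD.mem_nhds hq)
    have hH2 := hH.contDiffAt (hD.mem_nhds hq)
    have hu2 := hu.contDiffAt (hD.mem_nhds hq)
    obtain ⟨⟨s1, s2⟩, ⟨s3, s4⟩, s5, s6⟩ := hS q hq
    rw [ZCAux.key w B H u ε μ q hw2 hB2 hH2 hu2 hε hμ, s1, s2, s3, s4, s5, s6]
    refine Matrix.ext fun i j => ?_
    fin_cases i <;> fin_cases j <;> simp
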